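/- There exists a causal measurement scenario and a cover for which the strategy presheaf Γ is not separated: concretely, for X = {x,y,z}, O_w = {0,1}, enabling relation ∅ ⊢ x, ∅ ⊢ y, {(x,0),(y,0)} ⊢ z, and cover U₁ = {x,z}, U₂ = {y,z}, the strategies σ₁ = {∅, {(x,0)}} over M_{U₁} and σ₂ = {∅, {(y,0)}} over M_{U₂} form a compatible family whose union is not total (z is accessible from {(x,0),(y,0)} ∈ Hist(M_X) but the union contains no extension by z), and there exist two distinct strategies over M_X both restricting to σ₁ and σ₂. -/
import Mathlib


/-- A causal measurement scenario: a type of measurements `X`, outcome sets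
`O x`, and an enabling relation from sets of events to measurements. -/
structure CMS (X Ω : Type*) where
  O : X → Set Ω
  enab : Set (X × Ω) → X → Prop

namespace CMS

variable {X Ω : Type*}

/-- A set of events is consistent if it is the graph of a partial function. -/
def consistent (s : Set (X × Ω)) : Prop :=
  ∀ x o o', (x, o) ∈ s → (x, o') ∈ s → o = o'

/-- The domain of a set of events: the measurements performed. -/
def domain (s : Set (X × Ω)) : Set X := {x | ∃ o, (x, o) ∈ s}

/-- Accessibility: `x` may be performed after the events in `s`. -/
def acc (M : CMS X Ω) (s : Set (X × Ω)) (x : X) : Prop :=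
  x ∉ domain s ∧ ∃ t ⊆ s, M.enab t x

/-- Histories: the least family containing `∅` and closed under adjoining
an event `(x, o)` for accessible `x` and `o ∈ O x`. -/
inductive Hist (M : CMS X Ω) : Set (X × Ω) → Prop
  | empty : Hist M ∅
  | step {s : Set (X × Ω)} {x : X} {o : Ω} :
      Hist M s → M.acc s x → o ∈ M.O x → Hist M (s ∪ {(x, o)})

/-- A strategy for Nature: a (nonempty) downward-closed set of histories,
deterministic and total: unique outcome responses to accessible measurements. -/
structure IsStrategy (M : CMS X Ω) (σ : Set (Set (X × Ω))) : Prop where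
  nonempty : σ.Nonempty
  hist : ∀ s ∈ σ, M.Hist s
  dc : ∀ s t : Set (X × Ω), M.Hist s → s ⊆ t → t ∈ σ → s ∈ σ
  resp : ∀ s ∈ σ, ∀ x : X, M.acc s x →
    ∃! o : Ω, o ∈ M.O x ∧ s ∪ {(x, o)} ∈ σ

/-- The restriction `M_U` of a scenario to a subset `U` of measurements. -/
def restrict (M : CMS X Ω) (U : Set X) : CMS X Ω where
  O := M.O
  enab := fun s x => M.enab s x ∧ domain s ∪ {x} ⊆ U

end CMS

open CMS

/-- The concrete scenario of the non-separation example: `X = {x,y,z} = Fin 3`,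
outcomes `Fin 2`, enabling `∅ ⊢ x`, `∅ ⊢ y`, `{(x,0),(y,0)} ⊢ z`. -/
def Mex : CMS (Fin 3) (Fin 2) where
  O := fun _ => Set.univ
  enab := fun s w => (s = ∅ ∧ (w = 0 ∨ w = 1)) ∨
    (s = ({((0 : Fin 3), (0 : Fin 2)), ((1 : Fin 3), (0 : Fin 2))} :
      Set (Fin 3 × Fin 2)) ∧ w = 2)

def Uex₁ : Set (Fin 3) := {0, 2}
def Uex₂ : Set (Fin 3) := {1, 2}

def σex₁ : Set (Set (Fin 3 × Fin 2)) := {∅, {((0 : Fin 3), (0 : Fin 2))}}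
def σex₂ : Set (Set (Fin 3 × Fin 2)) := {∅, {((1 : Fin 3), (0 : Fin 2))}}

section NotSepAux

open CMS

abbrev Eev := Fin 3 × Fin 2

def prS : Set Eev := {((0 : Fin 3), (0 : Fin 2)), ((1 : Fin 3), (0 : Fin 2))}
def trS (c : Fin 2) : Set Eev :=
  {((0 : Fin 3), (0 : Fin 2)), ((1 : Fin 3), (0 : Fin 2)), ((2 : Fin 3), c)}

lemma acc_elim {U : Set (Fin 3)} {s : Set Eev} {x : Fin 3}
    (h : (Mex.restrict U).acc s x) :
    x ∉ domain s ∧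
      (((x = 0 ∨ x = 1) ∧ x ∈ U) ∨
        (x = 2 ∧ prS ⊆ s ∧ (0 : Fin 3) ∈ U ∧ (1 : Fin 3) ∈ U ∧ (2 : Fin 3) ∈ U)) := by
  obtain ⟨hx, t, hts, henab, hdom⟩ := h
  refine ⟨hx, ?_⟩
  rcases henab with ⟨rfl, hx01⟩ | ⟨rfl, rfl⟩
  · exact Or.inl ⟨hx01, hdom (by simp [domain])⟩
  · refine Or.inr ⟨rfl, hts, ?_, ?_, ?_⟩
    · exact hdom (Or.inl ⟨0, by simp⟩)
    · exact hdom (Or.inl ⟨0, by simp⟩)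
    · exact hdom (Or.inr rfl)

lemma acc_intro01 {U : Set (Fin 3)} {s : Set Eev} {x : Fin 3}
    (hx : x ∉ domain s) (h01 : x = 0 ∨ x = 1) (hU : x ∈ U) :
    (Mex.restrict U).acc s x := by
  refine ⟨hx, ∅, by simp, Or.inl ⟨rfl, h01⟩, ?_⟩
  simp [domain, hU]

lemma acc_intro2 {U : Set (Fin 3)} {s : Set Eev}
    (hx : (2 : Fin 3) ∉ domain s) (hps : prS ⊆ s)
    (h0 : (0 : Fin 3) ∈ U) (h1 : (1 : Fin 3) ∈ U) (h2 : (2 : Fin 3) ∈ U) :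
    (Mex.restrict U).acc s 2 := by
  refine ⟨hx, prS, hps, Or.inr ⟨rfl, rfl⟩, ?_⟩
  intro w hw
  rcases hw with hw | hw
  · obtain ⟨o, ho⟩ := hw
    rcases ho with ho | ho
    · rw [show w = 0 from congrArg Prod.fst ho]; exact h0
    · rw [show w = 1 from congrArg Prod.fst ho]; exact h1
  · rw [hw]; exact h2

lemma hist_U1 {s : Set Eev} (h : (Mex.restrict Uex₁).Hist s) :
    s = ∅ ∨ ∃ a, s = {((0 : Fin 3), a)} := by
  induction h with
  | empty => exact Or.inl rfl
  | @step s x o hs hacc ho ih =>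
    obtain ⟨hx, hc⟩ := acc_elim hacc
    rcases hc with ⟨h01 , hU⟩ | ⟨rfl, _, _, h1U, _⟩
    · rcases h01 with rfl | rfl
      · rcases ih with rfl | ⟨a, rfl⟩
        · exact Or.inr ⟨o, by simp⟩
        · exact absurd ⟨a, rfl⟩ hx
      · exact absurd hU (by simp [Uex₁])
    · exact absurd h1U (by simp [Uex₁])

lemma hist_U2 {s : Set Eev} (h : (Mex.restrict Uex₂).Hist s) :
    s = ∅ ∨ ∃ b, s = {((1 : Fin 3), b)} := by
  induction h with
  | empty => exact Or.inl rfl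
  | @step s x o hs hacc ho ih =>
    obtain ⟨hx, hc⟩ := acc_elim hacc
    rcases hc with ⟨h01 , hU⟩ | ⟨rfl, _, h0U, _, _⟩
    · rcases h01 with rfl | rfl
      · exact absurd hU (by simp [Uex₂])
      · rcases ih with rfl | ⟨b, rfl⟩
        · exact Or.inr ⟨o, by simp⟩
        · exact absurd ⟨b, rfl⟩ hx
    · exact absurd h0U (by simp [Uex₂])

lemma hist_I {s : Set Eev} (h : (Mex.restrict (Uex₁ ∩ Uex₂)).Hist s) : s = ∅ := by
  induction h with
  | empty => rfl
  | @step s x o hs hacc ho ih =>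
    obtain ⟨hx, hc⟩ := acc_elim hacc
    rcases hc with ⟨h01 , hU⟩ | ⟨rfl, _, h0U, _, _⟩
    · rcases h01 with rfl | rfl
      · exact absurd hU.2 (by simp [Uex₂])
      · exact absurd hU.1 (by simp [Uex₁])
    · exact absurd h0U.2 (by simp [Uex₂])

lemma hist_U {s : Set Eev} (h : (Mex.restrict (Uex₁ ∪ Uex₂)).Hist s) :
    s = ∅ ∨ (∃ a, s = {((0 : Fin 3), a)}) ∨ (∃ b, s = {((1 : Fin 3), b)}) ∨
      (∃ a b, s = {((0 : Fin 3), a), ((1 : Fin 3), b)}) ∨ ∃ c, s = trS c := by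
  induction h with
  | empty => exact Or.inl rfl
  | @step s x o hs hacc ho ih =>
    obtain ⟨hx, hc⟩ := acc_elim hacc
    rcases hc with ⟨h01 , hU⟩ | ⟨rfl, hps, _⟩
    · rcases h01 with rfl | rfl
      · rcases ih with rfl | ⟨a, rfl⟩ | ⟨b, rfl⟩ | ⟨a, b, rfl⟩ | ⟨c, rfl⟩
        · exact Or.inr (Or.inl ⟨o, by simp⟩)
        · exact absurd ⟨a, by simp⟩ hx
        · refine Or.inr (Or.inr (Or.inr (Or.inl ⟨o, b, ?_⟩)))
          ext e; simp [Set.mem_insert_iff]; try tauto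
        · exact absurd ⟨a, by simp⟩ hx
        · exact absurd ⟨0, by simp [trS]⟩ hx
      · rcases ih with rfl | ⟨a, rfl⟩ | ⟨b, rfl⟩ | ⟨a, b, rfl⟩ | ⟨c, rfl⟩
        · exact Or.inr (Or.inr (Or.inl ⟨o, by simp⟩))
        · refine Or.inr (Or.inr (Or.inr (Or.inl ⟨a, o, ?_⟩)))
          ext e; simp [Set.mem_insert_iff]; try tauto
        · exact absurd ⟨b, by simp⟩ hx
        · exact absurd ⟨b, by simp⟩ hx
        · exact absurd ⟨0, by simp [trS]⟩ hx
    · have h0 : ((0 : Fin 3), (0 : Fin 2)) ∈ s := hps (by simp [prS])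
      have h1 : ((1 : Fin 3), (0 : Fin 2)) ∈ s := hps (by simp [prS])
      rcases ih with rfl | ⟨a, rfl⟩ | ⟨b, rfl⟩ | ⟨a, b, rfl⟩ | ⟨c, rfl⟩
      · simp at h0
      · simp [Prod.ext_iff] at h1
      · simp [Prod.ext_iff] at h0
      · have ha : a = 0 := by
          rcases h0 with h | h <;> simp [Prod.ext_iff] at h <;> omega
        have hb : b = 0 := by
          rcases h1 with h | h <;> simp [Prod.ext_iff] at h <;> omega
        subst ha hb
        refine Or.inr (Or.inr (Or.inr (Or.inr ⟨o, ?_⟩)))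
        ext e; simp [trS, Set.mem_insert_iff]; try tauto
      · exact absurd ⟨c, by simp [trS]⟩ hx

end NotSepAux

section NotSepAux2

open CMS

lemma hist0 {U : Set (Fin 3)} (hU : (0 : Fin 3) ∈ U) :
    (Mex.restrict U).Hist {((0 : Fin 3), (0 : Fin 2))} := by
  have h := Hist.step (M := Mex.restrict U)
    Hist.empty (acc_intro01 (by simp [domain]) (Or.inl rfl) hU) (Set.mem_univ (0 : Fin 2))
  simpa using h

lemma hist1 {U : Set (Fin 3)} (hU : (1 : Fin 3) ∈ U) :
    (Mex.restrict U).Hist {((1 : Fin 3), (0 : Fin 2))} := by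
  have h := Hist.step (M := Mex.restrict U)
    Hist.empty (acc_intro01 (by simp [domain]) (Or.inr rfl) hU) (Set.mem_univ (0 : Fin 2))
  simpa using h

lemma mem0U : (0 : Fin 3) ∈ Uex₁ ∪ Uex₂ := by simp [Uex₁]
lemma mem1U : (1 : Fin 3) ∈ Uex₁ ∪ Uex₂ := by simp [Uex₂]
lemma mem2U : (2 : Fin 3) ∈ Uex₁ ∪ Uex₂ := by simp [Uex₁]

lemma hist_prS : (Mex.restrict (Uex₁ ∪ Uex₂)).Hist prS := by
  have h := Hist.step (M := Mex.restrict (Uex₁ ∪ Uex₂)) (hist0 mem0U)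
    (acc_intro01 (x := 1) (by simp [domain, Prod.ext_iff]) (Or.inr rfl) mem1U)
    (Set.mem_univ (0 : Fin 2))
  have e : ({((0 : Fin 3), (0 : Fin 2))} : Set Eev) ∪ {((1 : Fin 3), (0 : Fin 2))} = prS := by
    ext e
    simp only [prS, Set.mem_union, Set.mem_insert_iff, Set.mem_singleton_iff]
    try tauto
  rwa [e] at h

lemma dom2_prS : (2 : Fin 3) ∉ domain prS := by
  simp [domain, prS, Prod.ext_iff]

lemma union2_prS (c : Fin 2) : prS ∪ {((2 : Fin 3), c)} = trS c := by
  ext e; simp [prS, trS, Set.mem_insert_iff]; tauto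

lemma hist_trS (c : Fin 2) : (Mex.restrict (Uex₁ ∪ Uex₂)).Hist (trS c) := by
  have h := Hist.step (M := Mex.restrict (Uex₁ ∪ Uex₂)) hist_prS
    (acc_intro2 dom2_prS (subset_refl _) mem0U mem1U mem2U) (Set.mem_univ c)
  rwa [union2_prS] at h

/-- The two gluings. -/
def τS (c : Fin 2) : Set (Set Eev) :=
  {s | (Mex.restrict (Uex₁ ∪ Uex₂)).Hist s ∧ s ⊆ trS c}

lemma strat1 : (Mex.restrict Uex₁).IsStrategy σex₁ := by
  constructor
  · exact ⟨∅, Or.inl rfl⟩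
  · rintro s (rfl | rfl)
    · exact Hist.empty
    · exact hist0 (by simp [Uex₁])
  · rintro s t hs hst (rfl | rfl)
    · exact Or.inl (Set.subset_empty_iff.mp hst)
    · rcases hist_U1 hs with rfl | ⟨a, rfl⟩
      · exact Or.inl rfl
      · have := hst rfl
        simp only [Set.mem_singleton_iff, Prod.mk.injEq] at this
        rw [this.2]; exact Or.inr rfl
  · rintro s (rfl | rfl) x hacc
    · obtain ⟨hx, hc⟩ := acc_elim hacc
      rcases hc with ⟨h01, hU⟩ | ⟨rfl, hps, _⟩
      · rcases h01 with rfl | rfl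
        · refine ⟨0, ⟨Set.mem_univ _, by simp [σex₁]⟩, ?_⟩
          rintro o' ⟨-, h⟩
          simp only [Set.empty_union, σex₁, Set.mem_insert_iff,
            Set.mem_singleton_iff] at h
          rcases h with h | h
          · exact absurd h (Set.singleton_ne_empty _)
          · exact congrArg Prod.snd (Set.singleton_eq_singleton_iff.mp h)
        · exact absurd hU (by simp [Uex₁])
      · exact ((hps (Or.inl rfl)).elim)
    · obtain ⟨hx, hc⟩ := acc_elim hacc
      rcases hc with ⟨h01, hU⟩ | ⟨rfl, hps, _⟩
      · rcases h01 with rfl | rfl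
        · exact absurd ⟨0, rfl⟩ hx
        · exact absurd hU (by simp [Uex₁])
      · have := hps (show ((1 : Fin 3), (0 : Fin 2)) ∈ prS by simp [prS])
        simp [Prod.ext_iff] at this

lemma strat2 : (Mex.restrict Uex₂).IsStrategy σex₂ := by
  constructor
  · exact ⟨∅, Or.inl rfl⟩
  · rintro s (rfl | rfl)
    · exact Hist.empty
    · exact hist1 (by simp [Uex₂])
  · rintro s t hs hst (rfl | rfl)
    · exact Or.inl (Set.subset_empty_iff.mp hst)
    · rcases hist_U2 hs with rfl | ⟨b, rfl⟩
      · exact Or.inl rfl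
      · have := hst rfl
        simp only [Set.mem_singleton_iff, Prod.mk.injEq] at this
        rw [this.2]; exact Or.inr rfl
  · rintro s (rfl | rfl) x hacc
    · obtain ⟨hx, hc⟩ := acc_elim hacc
      rcases hc with ⟨h01, hU⟩ | ⟨rfl, hps, _⟩
      · rcases h01 with rfl | rfl
        · exact absurd hU (by simp [Uex₂])
        · refine ⟨0, ⟨Set.mem_univ _, by simp [σex₂]⟩, ?_⟩
          rintro o' ⟨-, h⟩
          simp only [Set.empty_union, σex₂, Set.mem_insert_iff,
            Set.mem_singleton_iff] at h
          rcases h with h | h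
          · exact absurd h (Set.singleton_ne_empty _)
          · exact congrArg Prod.snd (Set.singleton_eq_singleton_iff.mp h)
      · exact ((hps (Or.inl rfl)).elim)
    · obtain ⟨hx, hc⟩ := acc_elim hacc
      rcases hc with ⟨h01, hU⟩ | ⟨rfl, hps, _⟩
      · rcases h01 with rfl | rfl
        · exact absurd hU (by simp [Uex₂])
        · exact absurd ⟨0, rfl⟩ hx
      · have := hps (show ((0 : Fin 3), (0 : Fin 2)) ∈ prS by simp [prS])
        simp [Prod.ext_iff] at this

lemma out_of_union {s : Set Eev} {x : Fin 3} {o : Fin 2} {c : Fin 2}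
    (h : s ∪ {(x, o)} ⊆ trS c) : (x, o) ∈ trS c := h (Or.inr rfl)

lemma strat_τ (c : Fin 2) : (Mex.restrict (Uex₁ ∪ Uex₂)).IsStrategy (τS c) := by
  constructor
  · exact ⟨∅, Hist.empty, Set.empty_subset _⟩
  · exact fun s hs => hs.1
  · exact fun s t hs hst ht => ⟨hs, hst.trans ht.2⟩
  · rintro s ⟨hs, hsub⟩ x hacc
    obtain ⟨hx, hc⟩ := acc_elim hacc
    rcases hist_U hs with rfl | ⟨a, rfl⟩ | ⟨b, rfl⟩ | ⟨a, b, rfl⟩ | ⟨c', rfl⟩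
    · -- s = ∅
      rcases hc with ⟨h01, -⟩ | ⟨rfl, hps, -⟩
      · rcases h01 with rfl | rfl
        · refine ⟨0, ⟨Set.mem_univ _, ⟨by simpa using hist0 mem0U, ?_⟩⟩, ?_⟩
          · intro e he
            simp only [Set.mem_union, Set.mem_singleton_iff, Set.empty_union] at he
            simp only [trS, Set.mem_insert_iff, Set.mem_singleton_iff]
            tauto
          · rintro o' ⟨-, -, h⟩
            have := out_of_union h
            simp [trS, Prod.ext_iff] at this; tauto
        · refine ⟨0, ⟨Set.mem_univ _, ⟨by simpa using hist1 mem1U, ?_⟩⟩, ?_⟩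
          · intro e he
            simp only [Set.mem_union, Set.mem_singleton_iff, Set.empty_union] at he
            simp only [trS, Set.mem_insert_iff, Set.mem_singleton_iff]
            tauto
          · rintro o' ⟨-, -, h⟩
            have := out_of_union h
            simp [trS, Prod.ext_iff] at this; tauto
      · exact ((hps (Or.inl rfl)).elim)
    · -- s = {(0,a)}
      have ha : a = 0 := by
        have := hsub rfl; simp [trS, Prod.ext_iff] at this; tauto
      subst ha
      rcases hc with ⟨h01, -⟩ | ⟨rfl, hps, -⟩
      · rcases h01 with rfl | rfl
        · exact absurd ⟨0, rfl⟩ hx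
        · refine ⟨0, ⟨Set.mem_univ _, ?_, ?_⟩, ?_⟩
          · have e : ({((0 : Fin 3), (0 : Fin 2))} : Set Eev) ∪
                {((1 : Fin 3), (0 : Fin 2))} = prS := by
              ext e
              simp only [prS, Set.mem_union, Set.mem_insert_iff, Set.mem_singleton_iff]
              try tauto
            rw [e]; exact hist_prS
          · intro e he
            simp only [Set.mem_union, Set.mem_singleton_iff] at he
            simp only [trS, Set.mem_insert_iff, Set.mem_singleton_iff]
            tauto
          · rintro o' ⟨-, -, h⟩
            have := out_of_union h
            simp [trS, Prod.ext_iff] at this; tauto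
      · have := hps (show ((1 : Fin 3), (0 : Fin 2)) ∈ prS by simp [prS])
        simp [Prod.ext_iff] at this
    · -- s = {(1,b)}
      have hb : b = 0 := by
        have := hsub rfl; simp [trS, Prod.ext_iff] at this; tauto
      subst hb
      rcases hc with ⟨h01, -⟩ | ⟨rfl, hps, -⟩
      · rcases h01 with rfl | rfl
        · refine ⟨0, ⟨Set.mem_univ _, ?_, ?_⟩, ?_⟩
          · have e : ({((1 : Fin 3), (0 : Fin 2))} : Set Eev) ∪
                {((0 : Fin 3), (0 : Fin 2))} = prS := by
              ext e
              simp only [prS, Set.mem_union, Set.mem_insert_iff, Set.mem_singleton_iff]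
              try tauto
            rw [e]; exact hist_prS
          · intro e he
            simp only [Set.mem_union, Set.mem_singleton_iff] at he
            simp only [trS, Set.mem_insert_iff, Set.mem_singleton_iff]
            tauto
          · rintro o' ⟨-, -, h⟩
            have := out_of_union h
            simp [trS, Prod.ext_iff] at this; tauto
        · exact absurd ⟨0, rfl⟩ hx
      · have := hps (show ((0 : Fin 3), (0 : Fin 2)) ∈ prS by simp [prS])
        simp [Prod.ext_iff] at this
    · -- s = {(0,a),(1,b)}
      have ha : a = 0 := by
        have := hsub (Or.inl rfl); simp [trS, Prod.ext_iff] at this; tauto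
      have hb : b = 0 := by
        have := hsub (Or.inr rfl); simp [trS, Prod.ext_iff] at this; tauto
      subst ha hb
      rcases hc with ⟨h01, -⟩ | ⟨rfl, hps, -⟩
      · rcases h01 with rfl | rfl
        · exact absurd ⟨0, Or.inl rfl⟩ hx
        · exact absurd ⟨0, Or.inr rfl⟩ hx
      · refine ⟨c, ⟨Set.mem_univ _, ?_, ?_⟩, ?_⟩
        · rw [show ({((0 : Fin 3), (0 : Fin 2)), ((1 : Fin 3), (0 : Fin 2))} : Set Eev)
              = prS from rfl, union2_prS]
          exact hist_trS c
        · rw [show ({((0 : Fin 3), (0 : Fin 2)), ((1 : Fin 3), (0 : Fin 2))} : Set Eev)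
              = prS from rfl, union2_prS]
        · rintro o' ⟨-, -, h⟩
          have := out_of_union h
          simp [trS, Prod.ext_iff] at this; tauto
    · -- s = trS c'
      exfalso
      rcases hc with ⟨h01, -⟩ | ⟨rfl, hps, -⟩
      · rcases h01 with rfl | rfl
        · exact hx ⟨0, Or.inl rfl⟩
        · exact hx ⟨0, Or.inr (Or.inl rfl)⟩
      · exact hx ⟨c', Or.inr (Or.inr rfl)⟩

lemma τ_inter1 (c : Fin 2) : τS c ∩ {s | (Mex.restrict Uex₁).Hist s} = σex₁ := by
  ext s
  constructor
  · rintro ⟨⟨-, hsub⟩, hs1⟩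
    rcases hist_U1 hs1 with rfl | ⟨a, rfl⟩
    · exact Or.inl rfl
    · have ha : a = 0 := by
        have := hsub rfl; simp [trS, Prod.ext_iff] at this; tauto
      subst ha; exact Or.inr rfl
  · rintro (rfl | rfl)
    · exact ⟨⟨Hist.empty, Set.empty_subset _⟩, Hist.empty⟩
    · refine ⟨⟨hist0 mem0U, ?_⟩, hist0 (by simp [Uex₁])⟩
      intro e he; simp at he; simp [he, trS]

lemma τ_inter2 (c : Fin 2) : τS c ∩ {s | (Mex.restrict Uex₂).Hist s} = σex₂ := by
  ext s
  constructor
  · rintro ⟨⟨-, hsub⟩, hs2⟩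
    rcases hist_U2 hs2 with rfl | ⟨b, rfl⟩
    · exact Or.inl rfl
    · have hb : b = 0 := by
        have := hsub rfl; simp [trS, Prod.ext_iff] at this; tauto
      subst hb; exact Or.inr rfl
  · rintro (rfl | rfl)
    · exact ⟨⟨Hist.empty, Set.empty_subset _⟩, Hist.empty⟩
    · refine ⟨⟨hist1 mem1U, ?_⟩, hist1 (by simp [Uex₂])⟩
      intro e he; simp at he; simp [he, trS]

end NotSepAux2

/-- The strategy presheaf is not separated: a compatible family whose union is
not total, admitting two distinct gluings. -/
theorem not_separated :
    (Mex.restrict Uex₁).IsStrategy σex₁ ∧ (Mex.restrict Uex₂).IsStrategy σex₂ ∧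
    σex₁ ∩ {s | (Mex.restrict (Uex₁ ∩ Uex₂)).Hist s} =
      σex₂ ∩ {s | (Mex.restrict (Uex₁ ∩ Uex₂)).Hist s} ∧
    (Mex.restrict (Uex₁ ∪ Uex₂)).Hist
      ({((0 : Fin 3), (0 : Fin 2)), ((1 : Fin 3), (0 : Fin 2))} : Set (Fin 3 × Fin 2)) ∧
    (Mex.restrict (Uex₁ ∪ Uex₂)).acc
      ({((0 : Fin 3), (0 : Fin 2)), ((1 : Fin 3), (0 : Fin 2))} : Set (Fin 3 × Fin 2)) 2 ∧
    (∀ o : Fin 2,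
      ({((0 : Fin 3), (0 : Fin 2)), ((1 : Fin 3), (0 : Fin 2))} : Set (Fin 3 × Fin 2)) ∪
        {((2 : Fin 3), o)} ∉ σex₁ ∪ σex₂) ∧
    ∃ τ₁ τ₂ : Set (Set (Fin 3 × Fin 2)),
      (Mex.restrict (Uex₁ ∪ Uex₂)).IsStrategy τ₁ ∧
      (Mex.restrict (Uex₁ ∪ Uex₂)).IsStrategy τ₂ ∧ τ₁ ≠ τ₂ ∧
      τ₁ ∩ {s | (Mex.restrict Uex₁).Hist s} = σex₁ ∧
      τ₁ ∩ {s | (Mex.restrict Uex₂).Hist s} = σex₂ ∧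
      τ₂ ∩ {s | (Mex.restrict Uex₁).Hist s} = σex₁ ∧
      τ₂ ∩ {s | (Mex.restrict Uex₂).Hist s} = σex₂ := by
  refine ⟨strat1, strat2, ?_, hist_prS,
    acc_intro2 dom2_prS (subset_refl _) mem0U mem1U mem2U, ?_, ?_⟩
  · ext s
    constructor
    · rintro ⟨-, hI⟩
      have h := hist_I hI
      subst h
      exact ⟨Or.inl rfl, hI⟩
    · rintro ⟨-, hI⟩
      have h := hist_I hI
      subst h
      exact ⟨Or.inl rfl, hI⟩
  · intro o h
    rw [show ({((0 : Fin 3), (0 : Fin 2)), ((1 : Fin 3), (0 : Fin 2))} : Set Eev) = prS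
      from rfl, union2_prS] at h
    have h0 : ((0 : Fin 3), (0 : Fin 2)) ∈ trS o := Or.inl rfl
    have h1 : ((1 : Fin 3), (0 : Fin 2)) ∈ trS o := Or.inr (Or.inl rfl)
    rcases h with (h | h) | (h | h) <;> rw [h] at h0 h1
    · exact h0.elim
    · simp [Prod.ext_iff] at h1
    · exact h0.elim
    · simp [Prod.ext_iff] at h0
  · refine ⟨τS 0, τS 1, strat_τ 0, strat_τ 1, ?_, τ_inter1 0, τ_inter2 0,
      τ_inter1 1, τ_inter2 1⟩
    intro h
    have hm : trS 0 ∈ τS 0 := ⟨hist_trS 0, subset_refl _⟩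
    rw [h] at hm
    have := hm.2 (show ((2 : Fin 3), (0 : Fin 2)) ∈ trS 0 from Or.inr (Or.inr rfl))
    simp [trS, Prod.ext_iff] at this
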